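/- Let βⁱ, βʲ > 0, T > 0, ψ ∈ [0,T] and ν > 0 with ν < e^{−βʲψ}. Then for every t ∈ [0, ψ]: (βʲ/(βⁱ+βʲ)) e^{−(βⁱ+βʲ)t} ≥ ν e^{−βⁱT} + e^{−βʲψ} ( e^{−βⁱψ} − e^{−βⁱT} ) − (βⁱ/(βⁱ+βʲ)) e^{−(βⁱ+βʲ)ψ}. (Key inequality from Case 2 of the proof of the paper's Theorem 2, establishing that the HJB maximizer equals βⁱ on [0,ψ] when t₁ = T.) -/
import Mathlib


open Real Set

/-- Key inequality from Case 2 of the proof of the paper's Theorem 2: if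
`ν < e^{−βʲψ}`, then for every `t ∈ [0, ψ]`,
`(βʲ/(βⁱ+βʲ)) e^{−(βⁱ+βʲ)t}
  ≥ ν e^{−βⁱT} + e^{−βʲψ}(e^{−βⁱψ} − e^{−βⁱT}) − (βⁱ/(βⁱ+βʲ)) e^{−(βⁱ+βʲ)ψ}`,
establishing that the HJB maximizer equals `βⁱ` on `[0,ψ]` when `t₁ = T`. -/
theorem hjb_maximizer_inequality_case2
    (βi βj T ψ ν : ℝ) (hβi : 0 < βi) (hβj : 0 < βj) (hT : 0 < T)
    (hψ : ψ ∈ Icc (0:ℝ) T) (hν0 : 0 < ν)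
    (hcase : ν < Real.exp (-(βj * ψ))) :
    ∀ t ∈ Icc (0:ℝ) ψ,
      βj / (βi + βj) * Real.exp (-((βi + βj) * t))
        ≥ ν * Real.exp (-(βi * T))
            + Real.exp (-(βj * ψ))
                * (Real.exp (-(βi * ψ)) - Real.exp (-(βi * T)))
            - βi / (βi + βj) * Real.exp (-((βi + βj) * ψ)) := by
  intro t ht
  have hs : 0 < βi + βj := by linarith
  have h1 : ν * Real.exp (-(βi * T)) < Real.exp (-(βj * ψ)) * Real.exp (-(βi * T)) :=
    mul_lt_mul_of_pos_right hcase (Real.exp_pos _)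
  have h2 : Real.exp (-(βj * ψ)) * Real.exp (-(βi * ψ)) = Real.exp (-((βi + βj) * ψ)) := by
    rw [← Real.exp_add]; ring_nf
  have h3 : Real.exp (-((βi + βj) * ψ)) ≤ Real.exp (-((βi + βj) * t)) := by
    apply Real.exp_le_exp.2
    have := ht.2
    nlinarith
  have h4 : (0:ℝ) < βj / (βi + βj) := div_pos hβj hs
  have h5 : βi / (βi + βj) + βj / (βi + βj) = 1 := by
    field_simp
  have h6 : Real.exp (-(βj * ψ)) * (Real.exp (-(βi * ψ)) - Real.exp (-(βi * T)))
      = Real.exp (-((βi + βj) * ψ)) - Real.exp (-(βj * ψ)) * Real.exp (-(βi * T)) := by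
    rw [mul_sub, h2]
  have h7 : βi / (βi + βj) * Real.exp (-((βi + βj) * ψ))
      + βj / (βi + βj) * Real.exp (-((βi + βj) * ψ)) = Real.exp (-((βi + βj) * ψ)) := by
    rw [← add_mul, h5, one_mul]
  have h8 := mul_le_mul_of_nonneg_left h3 h4.le
  linarith
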